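/- Let k be an integer with 0 ≤ k ≤ m-1, and define a = (γ^(2m) + γ^(m+6k+2) + γ^(3k+1))/(3γ^(m+3k+1)), b = (γ^(2m+3k+1) + γ^(m+6k+2) + 1)/(3γ^(m+3k+1)), c = (γ^(6k+2) + γ^(3k+1) + 1)/(3γ^(3k+1)) in F_q. Then the map g : F_q → F_q given by g(x) = a·x^(2m+1) + b·x^(m+1) + c·x is a bijection of F_q, satisfies g(g(x)) = x for all x ∈ F_q, and the set {x ∈ F_q : g(x) = x} has exactly m+1 elements. -/

import Mathlib

theorem stmt8 (q m : ℕ) (F : Type*) [Field F] [Fintype F]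
    (hq : Fintype.card F = q) (hodd : Odd q) (hq3 : q % 3 = 1)
    (hm : m = (q - 1) / 3)
    (γ : Fˣ) (hγ : ∀ x : Fˣ, x ∈ Subgroup.zpowers γ)
    (k : ℕ) (hk : k ≤ m - 1)
    (a b c : F)
    (ha : a = ((γ : F)^(2*m) + (γ : F)^(m+6*k+2) + (γ : F)^(3*k+1)) / (3 * (γ : F)^(m+3*k+1)))
    (hb : b = ((γ : F)^(2*m+3*k+1) + (γ : F)^(m+6*k+2) + 1) / (3 * (γ : F)^(m+3*k+1)))
    (hc : c = ((γ : F)^(6*k+2) + (γ : F)^(3*k+1) + 1) / (3 * (γ : F)^(3*k+1)))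
    (g : F → F)
    (hg : ∀ x : F, g x = a * x^(2*m+1) + b * x^(m+1) + c * x) :
    Function.Bijective g ∧ (∀ x : F, g (g x) = x) ∧
      {x : F | g x = x}.ncard = m + 1 := by
  have hcard2 : 2 ≤ q := hq ▸ Fintype.one_lt_card
  have hq2 : q % 2 = 1 := Nat.odd_iff.mp hodd
  have h3m : q - 1 = 3 * m := by omega
  have hm1 : 1 ≤ m := by omega
  have hordγ : orderOf γ = 3 * m := by
    rw [orderOf_eq_card_of_forall_mem_zpowers hγ, Nat.card_units, Nat.card_eq_fintype_card, hq, h3m]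
  have hval : ∀ n : ℕ, ((γ^n : Fˣ) : F) = (γ : F)^n := fun n => Units.val_pow_eq_pow_val γ n
  have hγ3m : (γ : Fˣ)^(3*m) = 1 := by rw [← hordγ]; exact pow_orderOf_eq_one γ
  set ω : F := (γ : F)^m with hωdef
  set T : F := (γ : F)^(3*k+1) with hTdef
  have hγ3mF : (γ : F)^(3*m) = 1 := by rw [← hval, hγ3m, Units.val_one]
  have hω3 : ω^3 = 1 := by
    rw [hωdef, ← pow_mul, show m*3 = 3*m from by ring, hγ3mF]
  have hωne1 : ω ≠ 1 := by
    intro h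
    have h1 : (γ^m : Fˣ) = 1 := Units.ext (by rw [hval]; exact h)
    have hdvd := orderOf_dvd_of_pow_eq_one h1
    rw [hordγ] at hdvd
    have := Nat.le_of_dvd (by omega) hdvd
    omega
  have hω : ω^2 + ω + 1 = 0 := by
    have hfac : (ω - 1) * (ω^2 + ω + 1) = 0 := by linear_combination hω3
    rcases mul_eq_zero.mp hfac with h | h
    · exact absurd (sub_eq_zero.mp h) hωne1
    · exact h
  have h3 : (3 : F) ≠ 0 := by
    intro h
    apply hωne1
    have hsq : (ω - 1)^2 = 0 := by linear_combination hω - ω * h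
    have := (pow_eq_zero_iff (by norm_num : (2:ℕ) ≠ 0)).mp hsq
    exact sub_eq_zero.mp this
  have hω0 : ω ≠ 0 := by
    rw [hωdef, ← hval]; exact Units.ne_zero _
  have hT0 : T ≠ 0 := by
    rw [hTdef, ← hval]; exact Units.ne_zero _
  have hT1 : T ≠ 1 := by
    intro h
    have h1 : (γ^(3*k+1) : Fˣ) = 1 := Units.ext (by rw [hval]; exact h)
    have hdvd := orderOf_dvd_of_pow_eq_one h1
    rw [hordγ] at hdvd
    have := Nat.le_of_dvd (by omega) hdvd
    omega
  have hTm : T^m = ω := by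
    rw [hTdef, ← pow_mul, show (3*k+1)*m = 3*m*k + m from by ring, pow_add, pow_mul,
      hγ3mF, one_pow, one_mul]
  -- rewrite a, b, c
  have e1 : (γ : F)^(2*m) = ω^2 := by
    rw [show 2*m = m*2 from by ring, pow_mul]
  have e2 : (γ : F)^(m+6*k+2) = ω * T^2 := by
    rw [show m+6*k+2 = m+(3*k+1)*2 from by ring, pow_add, pow_mul]
  have e4 : (γ : F)^(m+3*k+1) = ω * T := by
    rw [show m+3*k+1 = m+(3*k+1) from by ring, pow_add]
  have e5 : (γ : F)^(2*m+3*k+1) = ω^2 * T := by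
    rw [show 2*m+3*k+1 = m*2+(3*k+1) from by ring, pow_add, pow_mul]
  have e6 : (γ : F)^(6*k+2) = T^2 := by
    rw [show 6*k+2 = (3*k+1)*2 from by ring, pow_mul]
  rw [e1, e2, e4] at ha
  rw [e5, e2, e4] at hb
  rw [e6] at hc
  -- scalar values
  have lam0 : a + b + c = T := by
    rw [ha, hb, hc]; clear_value ω T; field_simp
    linear_combination (1 + T) * hω
  have lam1 : (a * ω^2 + b * ω + c) * T = 1 := by
    rw [ha, hb, hc]; clear_value ω T; field_simp
    linear_combination (ω - 1 + T^2 + T) * hω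
  have lam2 : a * (ω^2)^2 + b * ω^2 + c = 1 := by
    rw [ha, hb, hc]; clear_value ω T; field_simp
    linear_combination (1 + ω^2*(ω - 1) + T^2*(1 + ω*(ω - 1)) + 2*T*(ω - 1)) * hω
  have hgx : ∀ x : F, g x = x * (a * (x^m)^2 + b * (x^m) + c) := by
    intro x; rw [hg]; ring
  have hx3m : ∀ x : F, x ≠ 0 → (x^m)^3 = 1 := by
    intro x hx
    rw [← pow_mul, show m*3 = 3*m from by ring, ← h3m, ← hq]
    exact FiniteField.pow_card_sub_one_eq_one x hx
  have key : ∀ x : F, g (g x) = x ∧ (g x = x ↔ x = 0 ∨ x^m = ω^2) := by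
    intro x
    by_cases hx : x = 0
    · subst hx
      have h0 : g 0 = 0 := by rw [hgx]; ring
      exact ⟨by rw [h0, h0], by simp [h0]⟩
    · have hcube : (x^m - 1) * (x^m - ω) * (x^m - ω^2) = 0 := by
        linear_combination hx3m x hx + (-(x^m)^2 + x^m*ω - ω + 1) * hω
      rcases mul_eq_zero.mp hcube with h12 | h2
      · rcases mul_eq_zero.mp h12 with h0' | h1'
        · -- x^m = 1
          have hu : x^m = 1 := sub_eq_zero.mp h0'
          have hg1 : g x = T * x := by
            rw [hgx, hu]; linear_combination x * lam0
          have hTx : (T*x)^m = ω := by rw [mul_pow, hTm, hu, mul_one]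
          have hgg : g (T*x) = x := by
            rw [hgx, hTx]; linear_combination x * lam1
          refine ⟨by rw [hg1, hgg], ?_, ?_⟩
          · intro hfix
            rw [hg1] at hfix
            exfalso
            have hz : (T - 1) * x = 0 := by linear_combination hfix
            rcases mul_eq_zero.mp hz with h | h
            · exact hT1 (by linear_combination h)
            · exact hx h
          · rintro (h | h)
            · exact absurd h hx
            · exfalso
              have hω2 : ω^2 = 1 := by rw [← h, hu]
              exact hωne1 (by linear_combination hω3 - ω * hω2)
        · -- x^m = ω
          have hu : x^m = ω := sub_eq_zero.mp h1'
          have hs : a * ω^2 + b * ω + c = T⁻¹ :=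
            eq_inv_of_mul_eq_one_left (by linear_combination lam1)
          have hg1 : g x = T⁻¹ * x := by
            rw [hgx, hu, hs]; ring
          have hTx : (T⁻¹*x)^m = 1 := by
            rw [mul_pow, inv_pow, hTm, hu, inv_mul_cancel₀ hω0]
          have hgg : g (T⁻¹*x) = x := by
            rw [hgx, hTx, show a*(1:F)^2 + b*1 + c = T from by linear_combination lam0]
            field_simp
          refine ⟨by rw [hg1, hgg], ?_, ?_⟩
          · intro hfix
            rw [hg1] at hfix
            exfalso
            have hz : (T⁻¹ - 1) * x = 0 := by linear_combination hfix
            rcases mul_eq_zero.mp hz with h | h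
            · have : T⁻¹ = 1 := by linear_combination h
              exact hT1 (by rw [← inv_eq_one]; exact this)
            · exact hx h
          · rintro (h | h)
            · exact absurd h hx
            · exfalso
              have hz : ω * (ω - 1) = 0 := by linear_combination hu - h
              rcases mul_eq_zero.mp hz with h' | h'
              · exact hω0 h'
              · exact hωne1 (sub_eq_zero.mp h')
      · -- x^m = ω^2
        have hu : x^m = ω^2 := sub_eq_zero.mp h2
        have hg1 : g x = x := by
          rw [hgx, hu]; linear_combination x * lam2
        refine ⟨by rw [hg1, hg1], ?_⟩
        constructor
        · intro _; exact Or.inr hu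
        · intro _; exact hg1
  have hinv : Function.Involutive g := fun x => (key x).1
  refine ⟨hinv.bijective, fun x => (key x).1, ?_⟩
  -- fixed point count
  have hset : {x : F | g x = x} = insert (0:F) {x : F | x^m = ω^2} := by
    ext x
    simp only [Set.mem_setOf_eq, Set.mem_insert_iff]
    exact (key x).2
  have hω20 : ω^2 ≠ 0 := pow_ne_zero _ hω0
  have h0notin : (0:F) ∉ {x : F | x^m = ω^2} := by
    simp only [Set.mem_setOf_eq]
    rw [zero_pow (by omega : m ≠ 0)]
    exact fun h => hω20 h.symm
  -- the fixed set in units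
  set δ : Fˣ := γ^3 with hδdef
  have hδm : δ^m = 1 := by rw [hδdef, ← pow_mul]; exact hγ3m
  have hUset : {x : F | x^m = ω^2} = Units.val '' ((fun v => γ^2 * v) '' (Subgroup.zpowers δ : Set Fˣ)) := by
    ext x
    simp only [Set.mem_setOf_eq, Set.mem_image, SetLike.mem_coe]
    constructor
    · intro hxm
      have hx0 : x ≠ 0 := by
        intro h; rw [h, zero_pow (by omega : m ≠ 0)] at hxm; exact hω20 hxm.symm
      set u : Fˣ := Units.mk0 x hx0 with hu
      have hum : u^m = γ^(2*m) := by
        apply Units.ext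
        rw [hval, Units.val_pow_eq_pow_val, Units.val_mk0, hxm, hωdef, ← pow_mul]
        congr 1; ring
      obtain ⟨n, hn⟩ := hγ u
      have hn' : γ ^ n = u := hn
      have hzn : (γ : Fˣ)^((n - 2) * (m:ℤ)) = 1 := by
        rw [sub_mul, zpow_sub, zpow_mul, zpow_natCast, hn', hum,
          show ((2:ℤ)*(m:ℤ)) = ((2*m : ℕ) : ℤ) from by push_cast; ring, zpow_natCast,
          mul_inv_cancel]
      have hdvd : ((orderOf γ : ℤ)) ∣ (n - 2) * m := orderOf_dvd_iff_zpow_eq_one.mpr hzn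
      rw [hordγ] at hdvd
      have hdvd3 : (3:ℤ) ∣ (n - 2) := by
        have hm0 : (m:ℤ) ≠ 0 := by exact_mod_cast (by omega : m ≠ 0)
        have : (3:ℤ) * (m:ℤ) ∣ (n-2) * (m:ℤ) := by exact_mod_cast hdvd
        exact (mul_dvd_mul_iff_right hm0).mp (by rwa [mul_comm ((n:ℤ)-2) (m:ℤ), mul_comm (3:ℤ) (m:ℤ)] at this)
      obtain ⟨j, hj⟩ := hdvd3
      refine ⟨u, ⟨δ^j, Subgroup.mem_zpowers_iff.mpr ⟨j, rfl⟩, ?_⟩, rfl⟩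
      rw [← hn', hδdef, ← zpow_natCast γ 3, ← zpow_mul, ← zpow_natCast γ 2, ← zpow_add]
      congr 1
      omega
    · rintro ⟨u, ⟨v, hv, huv⟩, hux⟩
      obtain ⟨j, hj⟩ := Subgroup.mem_zpowers_iff.mp hv
      have hvm : v^m = 1 := by
        calc v^m = (δ^(j:ℤ))^((m:ℕ):ℤ) := by rw [hj, zpow_natCast]
        _ = δ^((j:ℤ) * (m:ℤ)) := (zpow_mul δ j m).symm
        _ = δ^((m:ℤ) * (j:ℤ)) := by rw [mul_comm]
        _ = (δ^((m:ℕ):ℤ))^(j:ℤ) := zpow_mul δ (m:ℤ) j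
        _ = 1 := by rw [zpow_natCast, hδm, one_zpow]
      have hum : u^m = γ^(2*m) := by
        rw [← huv, mul_pow, hvm, mul_one, ← pow_mul]
      rw [← hux, ← Units.val_pow_eq_pow_val, hum, hval, e1]
  rw [hset, Set.ncard_insert_of_notMem h0notin, hUset]
  rw [Set.ncard_image_of_injective _ Units.val_injective]
  rw [Set.ncard_image_of_injective _ (mul_right_injective (γ^2))]
  have hz : (Subgroup.zpowers δ : Set Fˣ).ncard = m := by
    rw [← Nat.card_coe_set_eq, SetLike.coe_sort_coe, Nat.card_zpowers, hδdef, orderOf_pow,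
      hordγ, show Nat.gcd (3*m) 3 = 3 from by
        rw [show (3:ℕ) = 3*1 from rfl, Nat.gcd_mul_left]; simp]
    omega
  rw [hz]
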